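/- Let C be a binary self-complementary code of length n whose set of occurring nonzero distances is {n/2−α, n/2, n/2+α, n} for some integer α with 0 < α < n/2. Then |C| ≤ n(n² − 3n + 8)/3, and if equality holds then 4α² = 3n − 8. -/

import Mathlib

open Finset

def epsR : ZMod 2 → ℝ := fun a => 1 - 2 * (a.val : ℝ)

lemma zmod2_cases : ∀ a : ZMod 2, a = 0 ∨ a = 1 := by decide

lemma epsR_zero : epsR 0 = 1 := by norm_num [epsR, ZMod.val_zero]

lemma epsR_one : epsR 1 = -1 := by norm_num [epsR, ZMod.val_one]

lemma epsR_sq (a : ZMod 2) : epsR a ^ 2 = 1 := by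
  rcases zmod2_cases a with h | h <;> subst h <;>
    simp [epsR_zero, epsR_one] <;> norm_num

lemma epsR_mul (a b : ZMod 2) : epsR a * epsR b = epsR (a + b) := by
  rcases zmod2_cases a with h | h <;> rcases zmod2_cases b with h' | h' <;>
    subst h <;> subst h' <;> simp only [show (1+1:ZMod 2) = 0 from by decide, add_zero, zero_add] <;> norm_num [epsR_zero, epsR_one]

lemma epsR_add_one (a : ZMod 2) : epsR (a + 1) = - epsR a := by
  rcases zmod2_cases a with h | h <;> subst h
  · norm_num [epsR_zero, epsR_one]
  · rw [show (1+1:ZMod 2) = 0 from by decide]; norm_num [epsR_zero, epsR_one]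

lemma epsR_ne {a b : ZMod 2} (h : a ≠ b) : epsR (a + b) = -1 := by
  rcases zmod2_cases a with h1 | h1 <;> rcases zmod2_cases b with h2 | h2 <;>
    subst h1 <;> subst h2 <;> simp_all <;> norm_num [epsR_zero, epsR_one]

lemma esymm_insert {ι : Type*} [DecidableEq ι] (u : ι → ℝ) {a : ι} {s : Finset ι} (h : a ∉ s) (k : ℕ) :
    ∑ S ∈ (insert a s).powersetCard (k+1), ∏ i ∈ S, u i =
      ∑ S ∈ s.powersetCard (k+1), ∏ i ∈ S, u i + u a * ∑ S ∈ s.powersetCard k, ∏ i ∈ S, u i := by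
  rw [powersetCard_succ_insert h, sum_union, sum_image, mul_sum]
  · congr 1
    refine Finset.sum_congr rfl fun S hS => ?_
    rw [mem_powersetCard] at hS
    rw [prod_insert (fun ha => h (hS.1 ha))]
  · intro S hS T hT hST
    rw [mem_coe, mem_powersetCard] at hS hT
    have hA : a ∉ S := fun ha => h (hS.1 ha)
    have hB : a ∉ T := fun ha => h (hT.1 ha)
    rw [← erase_insert hA, hST, erase_insert hB]
  · rw [disjoint_right]
    intro S hS hS'
    simp only [mem_image] at hS
    obtain ⟨T, hT, rfl⟩ := hS
    rw [mem_powersetCard] at hS'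
    exact h (hS'.1 (mem_insert_self a T))

lemma esymm_one {ι : Type*} (u : ι → ℝ) (s : Finset ι) :
    ∑ S ∈ s.powersetCard 1, ∏ i ∈ S, u i = ∑ i ∈ s, u i := by
  rw [powersetCard_one, sum_map]
  simp

lemma sum_sq_expand {ι : Type*} [DecidableEq ι] (u : ι → ℝ) (s : Finset ι)
    (h : ∀ i ∈ s, u i ^ 2 = 1) :
    (∑ i ∈ s, u i) ^ 2 = (s.card : ℝ) + 2 * ∑ S ∈ s.powersetCard 2, ∏ i ∈ S, u i := by
  induction s using Finset.induction_on with
  | empty => rw [powersetCard_eq_empty.2 (by simp)]; simp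
  | insert a s ha ih =>
    have hu : ∀ i ∈ s, u i ^ 2 = 1 := fun i hi => h i (mem_insert_of_mem hi)
    have ha2 : u a ^ 2 = 1 := h a (mem_insert_self a s)
    rw [sum_insert ha, esymm_insert u ha 1, esymm_one, card_insert_of_notMem ha]
    push_cast
    rw [add_sq, ih hu]
    ring_nf
    rw [ha2]  -- maybe not needed
    ring

lemma sum_cube_expand {ι : Type*} [DecidableEq ι] (u : ι → ℝ) (s : Finset ι)
    (h : ∀ i ∈ s, u i ^ 2 = 1) :
    (∑ i ∈ s, u i) ^ 3 = (3 * (s.card : ℝ) - 2) * (∑ i ∈ s, u i)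
      + 6 * ∑ S ∈ s.powersetCard 3, ∏ i ∈ S, u i := by
  induction s using Finset.induction_on with
  | empty => rw [powersetCard_eq_empty.2 (by simp)]; simp
  | insert a s ha ih =>
    have hu : ∀ i ∈ s, u i ^ 2 = 1 := fun i hi => h i (mem_insert_of_mem hi)
    have ha2 : u a ^ 2 = 1 := h a (mem_insert_self a s)
    have hsq := sum_sq_expand u s hu
    rw [sum_insert ha, esymm_insert u ha 2, card_insert_of_notMem ha]
    push_cast
    have expand : (u a + ∑ i ∈ s, u i) ^ 3 =
        u a ^ 2 * u a + 3 * u a ^ 2 * (∑ i ∈ s, u i) + 3 * u a * (∑ i ∈ s, u i) ^ 2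
          + (∑ i ∈ s, u i) ^ 3 := by ring
    rw [expand, ha2, hsq, ih hu]
    ring

/-- basic distance lemmas -/
lemma hd_add_one (n : ℕ) (x y : Fin n → ZMod 2) :
    hammingDist x (y + 1) = n - hammingDist x y := by
  unfold hammingDist
  have key : ∀ a b : ZMod 2, (a ≠ b + 1) ↔ ¬ (a ≠ b) := by decide
  have h1 : ({i | x i ≠ (y + 1) i} : Finset (Fin n)) =
      ({i | x i ≠ y i} : Finset (Fin n))ᶜ := by
    ext i
    simp only [mem_filter, mem_univ, true_and, mem_compl, Pi.add_apply, Pi.one_apply]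
    exact key (x i) (y i)
  rw [h1, card_compl, Fintype.card_fin]

lemma dist_eq_n (n : ℕ) {x y : Fin n → ZMod 2} (h : hammingDist x y = n) : y = x + 1 := by
  have huniv : ({i | x i ≠ y i} : Finset (Fin n)) = univ := by
    apply Finset.eq_univ_of_card
    rw [Fintype.card_fin]
    exact h
  have hall : ∀ i, x i ≠ y i := by
    intro i
    have : i ∈ ({i | x i ≠ y i} : Finset (Fin n)) := by rw [huniv]; exact mem_univ i
    simpa using this
  have key : ∀ a b : ZMod 2, a ≠ b → b = a + 1 := by decide
  funext i
  simpa [Pi.add_apply] using key (x i) (y i) (hall i)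

lemma hd_le (n : ℕ) (x y : Fin n → ZMod 2) : hammingDist x y ≤ n := by
  simpa using (hammingDist_le_card_fintype (x := x) (y := y))

noncomputable def Bfun (n : ℕ) (x z : Fin n → ZMod 2) : ℝ :=
  ∑ i, epsR (x i) * epsR (z i)

noncomputable def Ffun (n α : ℕ) (x : Fin n → ZMod 2) : (Fin n → ZMod 2) → ℝ :=
  fun z => Bfun n x z ^ 3 - (2 * (α : ℝ)) ^ 2 * Bfun n x z

noncomputable def mfun (n : ℕ) (S : Finset (Fin n)) : (Fin n → ZMod 2) → ℝ :=
  fun z => ∏ i ∈ S, epsR (z i)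

def AA (n : ℕ) : Finset (Finset (Fin n)) :=
  (univ.powersetCard 1) ∪ (univ.powersetCard 3)

noncomputable def coefF (n α : ℕ) (x : Fin n → ZMod 2) (S : Finset (Fin n)) : ℝ :=
  (if S.card = 3 then 6 else (3 * (n : ℝ) - 2 - (2 * (α : ℝ)) ^ 2)) * ∏ i ∈ S, epsR (x i)

lemma Bfun_eq (n : ℕ) (x z : Fin n → ZMod 2) :
    Bfun n x z = (n : ℝ) - 2 * (hammingDist x z : ℝ) := by
  unfold Bfun
  have : ∀ i, epsR (x i) * epsR (z i) = if x i ≠ z i then (-1 : ℝ) else 1 := by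
    intro i
    by_cases h : x i = z i
    · simp [h, ← sq, epsR_sq, if_neg]
    · rw [epsR_mul, epsR_ne h, if_pos h]
  rw [Finset.sum_congr rfl fun i _ => this i]
  rw [Finset.sum_ite, Finset.sum_const, Finset.sum_const]
  have hcard : (filter (fun i => ¬ x i ≠ z i) univ).card
      = n - (filter (fun i => x i ≠ z i) univ).card := by
    rw [filter_not, card_sdiff_of_subset (filter_subset _ _), card_univ, Fintype.card_fin]
  rw [hcard]
  have hle : (filter (fun i => x i ≠ z i) univ).card ≤ n := hd_le n x z
  have hdd : (hammingDist x z : ℝ) = ((filter (fun i => x i ≠ z i) univ).card : ℝ) := rfl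
  rw [hdd]
  simp only [nsmul_eq_mul, mul_one, mul_neg_one]
  rw [Nat.cast_sub hle]
  ring

lemma mfun_mul (n : ℕ) (S T : Finset (Fin n)) (z : Fin n → ZMod 2) :
    mfun n S z * mfun n T z = mfun n (symmDiff S T) z := by
  unfold mfun
  rw [← Finset.prod_union_inter]
  have hu : S ∪ T = (symmDiff S T) ∪ (S ∩ T) := by
    ext i
    simp only [mem_union, mem_inter, Finset.mem_symmDiff]
    tauto
  have hdisj : Disjoint (symmDiff S T) (S ∩ T) := by
    rw [Finset.disjoint_left]
    intro i hi hi2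
    rw [Finset.mem_symmDiff] at hi
    rw [mem_inter] at hi2
    tauto
  rw [hu, Finset.prod_union hdisj, mul_assoc, ← Finset.prod_mul_distrib]
  have : ∀ i ∈ S ∩ T, epsR (z i) * epsR (z i) = 1 := fun i _ => by
    rw [← sq, epsR_sq]
  rw [Finset.prod_congr rfl this, Finset.prod_const_one, mul_one]

lemma sum_mfun_zero (n : ℕ) {U : Finset (Fin n)} (hU : U.Nonempty) :
    ∑ z : Fin n → ZMod 2, mfun n U z = 0 := by
  obtain ⟨j, hj⟩ := hU
  set δ : Fin n → ZMod 2 := Pi.single j 1 with hδ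
  have key : ∀ z, mfun n U (δ + z) = - mfun n U z := by
    intro z
    unfold mfun
    rw [← Finset.mul_prod_erase U (fun i => epsR ((δ + z) i)) hj,
      ← Finset.mul_prod_erase U (fun i => epsR (z i)) hj]
    have h1 : epsR ((δ + z) j) = - epsR (z j) := by
      have hj1 : (δ + z) j = z j + 1 := by
        simp [hδ, Pi.add_apply, Pi.single_eq_same, add_comm]
      rw [hj1, epsR_add_one]
    have h2 : ∀ i ∈ U.erase j, epsR ((δ + z) i) = epsR (z i) := by
      intro i hi
      have hd0 : δ i = 0 := Pi.single_eq_of_ne (mem_erase.1 hi).1 _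
      simp [Pi.add_apply, hd0]
    rw [Finset.prod_congr rfl h2, h1]
    ring
  have hsum : ∑ z, mfun n U (δ + z) = ∑ z, mfun n U z := by
    simpa using Equiv.sum_comp (Equiv.addLeft δ) (mfun n U)
  rw [Finset.sum_congr rfl (fun z _ => key z), Finset.sum_neg_distrib] at hsum
  linarith

lemma sum_mfun_mul_self (n : ℕ) (S : Finset (Fin n)) :
    ∑ z : Fin n → ZMod 2, mfun n S z * mfun n S z = (Fintype.card (Fin n → ZMod 2) : ℝ) := by
  have h1 : ∀ z : Fin n → ZMod 2, mfun n S z * mfun n S z = 1 := by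
    intro z; unfold mfun; rw [← Finset.prod_mul_distrib]
    exact Finset.prod_eq_one fun i _ => by rw [← sq, epsR_sq]
  rw [Finset.sum_congr rfl fun z _ => h1 z, Finset.sum_const, card_univ]
  simp

lemma sum_mfun_mul_ne (n : ℕ) {S T : Finset (Fin n)} (h : S ≠ T) :
    ∑ z : Fin n → ZMod 2, mfun n S z * mfun n T z = 0 := by
  have hU : (symmDiff S T).Nonempty := by
    rw [Finset.nonempty_iff_ne_empty]
    intro he
    apply h
    ext i
    by_contra hc
    have : i ∈ symmDiff S T := by
      rw [Finset.mem_symmDiff]; tauto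
    rw [he] at this
    exact absurd this (notMem_empty i)
  rw [Finset.sum_congr rfl fun z _ => mfun_mul n S T z]
  exact sum_mfun_zero n hU

lemma Ffun_eq_sum (n α : ℕ) (x : Fin n → ZMod 2) :
    Ffun n α x = ∑ S ∈ AA n, coefF n α x S • mfun n S := by
  funext z
  rw [Finset.sum_apply]
  set u : Fin n → ℝ := fun i => epsR (x i) * epsR (z i) with hu
  have husq : ∀ i ∈ (univ : Finset (Fin n)), u i ^ 2 = 1 := by
    intro i _
    rw [hu]
    simp only [mul_pow, epsR_sq]
    norm_num
  have hdisj : Disjoint (univ.powersetCard 1 : Finset (Finset (Fin n))) (univ.powersetCard 3) := by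
    rw [Finset.disjoint_left]
    intro S h1 h3
    rw [mem_powersetCard] at h1 h3
    omega
  have hsplit : ∑ S ∈ AA n, (coefF n α x S • mfun n S) z
      = ∑ S ∈ univ.powersetCard 1, (coefF n α x S • mfun n S) z
        + ∑ S ∈ univ.powersetCard 3, (coefF n α x S • mfun n S) z := by
    unfold AA
    rw [Finset.sum_union hdisj]
  rw [hsplit]
  have h1 : ∑ S ∈ univ.powersetCard 1, (coefF n α x S • mfun n S) z
      = (3 * (n:ℝ) - 2 - (2*(α:ℝ))^2) * ∑ i, u i := by
    rw [powersetCard_one, Finset.sum_map, Finset.mul_sum]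
    refine Finset.sum_congr rfl fun i _ => ?_
    simp only [Pi.smul_apply, smul_eq_mul, Function.Embedding.coeFn_mk]
    unfold coefF mfun
    rw [Finset.prod_singleton, Finset.prod_singleton, if_neg (by simp), hu]
    ring
  have h3 : ∑ S ∈ univ.powersetCard 3, (coefF n α x S • mfun n S) z
      = 6 * ∑ S ∈ univ.powersetCard 3, ∏ i ∈ S, u i := by
    rw [Finset.mul_sum]
    refine Finset.sum_congr rfl fun S hS => ?_
    simp only [Pi.smul_apply, smul_eq_mul]
    unfold coefF mfun
    rw [if_pos (mem_powersetCard.1 hS).2]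
    have hpd : ∏ i ∈ S, u i = (∏ i ∈ S, epsR (x i)) * ∏ i ∈ S, epsR (z i) :=
      Finset.prod_mul_distrib
    rw [hpd]
    ring
  rw [h1, h3]
  have hB : Bfun n x z = ∑ i, u i := rfl
  show Bfun n x z ^ 3 - (2 * (α:ℝ))^2 * Bfun n x z = _
  rw [hB, sum_cube_expand u univ husq, card_univ, Fintype.card_fin]
  ring

lemma six_choose (n : ℕ) (hn : 2 ≤ n) :
    ((6 * (n + n.choose 3) : ℕ) : ℤ) = (n : ℤ) * ((n : ℤ)^2 - 3*(n:ℤ) + 8) := by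
  have h6 : 6 * n.choose 3 = n * (n - 1) * (n - 2) := by
    have hd : n.descFactorial 3 = 6 * n.choose 3 := by
      rw [Nat.descFactorial_eq_factorial_mul_choose]
      norm_num [Nat.factorial]
    have hd2 : n.descFactorial 3 = (n - 2) * ((n - 1) * n) := by
      simp [Nat.descFactorial_succ, Nat.descFactorial_zero]
    rw [← hd, hd2]
    ring
  have hcast : ((n * (n - 1) * (n - 2) : ℕ) : ℤ) = (n:ℤ) * ((n:ℤ) - 1) * ((n:ℤ) - 2) := by
    push_cast [Nat.cast_sub (show 1 ≤ n by omega), Nat.cast_sub (show 2 ≤ n by omega)]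
    ring
  have : ((6 * (n + n.choose 3) : ℕ) : ℤ) = 6 * (n:ℤ) + ((6 * n.choose 3 : ℕ) : ℤ) := by
    push_cast
    ring
  rw [this, h6, hcast]
  ring

theorem stmt_10 (n α : ℕ) (hα1 : 0 < α) (hα2 : α < n / 2)
    (C : Finset (Fin n → ZMod 2))
    (hsc : ∀ x ∈ C, x + 1 ∈ C)
    (hdist : {i : ℕ | ∃ x ∈ C, ∃ y ∈ C, x ≠ y ∧ hammingDist x y = i} =
      {n / 2 - α, n / 2, n / 2 + α, n}) :
    3 * (C.card : ℤ) ≤ (n : ℤ) * ((n : ℤ) ^ 2 - 3 * n + 8) ∧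
      (3 * (C.card : ℤ) = (n : ℤ) * ((n : ℤ) ^ 2 - 3 * n + 8) →
        4 * (α : ℤ) ^ 2 = 3 * (n : ℤ) - 8) := by
  have hn0 : 0 < n := by omega
  have hn4 : 4 ≤ n := by omega
  have hmem : ∀ x ∈ C, ∀ y ∈ C, x ≠ y →
      hammingDist x y = n/2 - α ∨ hammingDist x y = n/2 ∨
      hammingDist x y = n/2 + α ∨ hammingDist x y = n := by
    intro x hx y hy hxy
    have hm : hammingDist x y ∈ ({n / 2 - α, n / 2, n / 2 + α, n} : Set ℕ) := by
      rw [← hdist]; exact ⟨x, hx, y, hy, hxy, rfl⟩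
    simpa [Set.mem_insert_iff, Set.mem_singleton_iff] using hm
  -- n is even
  have heven : n % 2 = 0 := by
    by_contra hodd
    have hocc : (n/2 - α) ∈ {i : ℕ | ∃ x ∈ C, ∃ y ∈ C, x ≠ y ∧ hammingDist x y = i} := by
      rw [hdist]; left; rfl
    obtain ⟨x, hx, y, hy, hxy, hdxy⟩ := hocc
    have hy1 : y + 1 ∈ C := hsc y hy
    have hxy1 : x ≠ y + 1 := by
      intro he
      have hn' : hammingDist x y = n := by
        rw [he, hammingDist_comm, hd_add_one n y y, hammingDist_self]
        omega
      omega
    have h2 := hmem x hx (y+1) hy1 hxy1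
    rw [hd_add_one n x y, hdxy] at h2
    omega
  -- setup
  have h11 : (1 : ZMod 2) + 1 = 0 := by decide
  have hone : ∀ x : Fin n → ZMod 2, x + 1 + 1 = x := by
    intro x; funext i
    simp only [Pi.add_apply, Pi.one_apply, add_assoc, h11, add_zero]
  set i0 : Fin n := ⟨0, hn0⟩ with hi0
  set C' : Finset (Fin n → ZMod 2) := C.filter (fun x => x i0 = 0) with hC'def
  have hmemC' : ∀ x ∈ C', x ∈ C ∧ x i0 = 0 := by
    intro x hx; exact Finset.mem_filter.1 hx |>.imp id id
  have hcardC : C.card = 2 * C'.card := by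
    have hbij : C'.card = (C.filter (fun x => ¬ x i0 = 0)).card := by
      apply Finset.card_bij (fun x _ => x + 1)
      · intro a ha
        obtain ⟨haC, ha0⟩ := hmemC' a ha
        rw [Finset.mem_filter]
        refine ⟨hsc a haC, ?_⟩
        simp [Pi.add_apply, Pi.one_apply, ha0]
      · intro a _ b _ hab
        have := congrArg (· + (1 : Fin n → ZMod 2)) hab
        simpa [hone] using this
      · intro b hb
        rw [Finset.mem_filter] at hb
        obtain ⟨hbC, hb0⟩ := hb
        have hb1 : b i0 = 1 := by
          rcases zmod2_cases (b i0) with h | h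
          · exact absurd h hb0
          · exact h
        refine ⟨b + 1, ?_, hone b⟩
        rw [hC'def, Finset.mem_filter]
        refine ⟨hsc b hbC, ?_⟩
        simp [Pi.add_apply, Pi.one_apply, hb1, h11]
    have hsplit : (C.filter (fun x => x i0 = 0)).card
        + (C.filter (fun x => ¬ x i0 = 0)).card = C.card :=
      by
      classical
      simpa using Finset.card_filter_add_card_filter_not
        (s := C) (p := fun x : Fin n → ZMod 2 => x i0 = 0)
    have hC'c : C'.card = (C.filter (fun x => x i0 = 0)).card := by rw [hC'def]
    linarith [hsplit, hbij, hC'c]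
  -- value facts
  have hhalf : ((n/2 : ℕ) : ℝ) = (n:ℝ)/2 := by
    have h2 : 2 * (n/2) = n := by omega
    have := congrArg (fun m : ℕ => (m : ℝ)) h2
    push_cast at this
    linarith
  have hself : ∀ x : Fin n → ZMod 2,
      Ffun n α x x = (n:ℝ)^3 - (2*(α:ℝ))^2 * (n:ℝ) := by
    intro x
    unfold Ffun
    rw [Bfun_eq, hammingDist_self]
    norm_num
  have hlampos : (0:ℝ) < (n:ℝ)^3 - (2*(α:ℝ))^2 * (n:ℝ) := by
    have h1 : 2 * α + 2 ≤ n := by omega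
    have h1' : 2 * (α:ℝ) + 2 ≤ (n:ℝ) := by exact_mod_cast h1
    have hn' : (0:ℝ) < (n:ℝ) := by exact_mod_cast hn0
    have ha' : (0:ℝ) ≤ (α:ℝ) := by positivity
    nlinarith [sq_nonneg ((n:ℝ) - 2*(α:ℝ))]
  have hzero : ∀ x ∈ C', ∀ y ∈ C', x ≠ y → Ffun n α x y = 0 := by
    intro x hx y hy hxy
    obtain ⟨hxC, hx0⟩ := hmemC' x hx
    obtain ⟨hyC, hy0⟩ := hmemC' y hy
    have hdy : hammingDist x y ≠ n := by
      intro hdn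
      have he1 := dist_eq_n n hdn
      have he2 : y i0 = x i0 + 1 := by rw [he1]; simp [Pi.add_apply, Pi.one_apply]
      rw [hx0, hy0] at he2
      exact absurd he2 (by decide)
    rcases hmem x hxC y hyC hxy with hc | hc | hc | hc
    · have hB : Bfun n x y = 2*(α:ℝ) := by
        rw [Bfun_eq, hc, Nat.cast_sub hα2.le, hhalf]
        have h2 : 2 * (n/2) = n := by omega
        have h2' : 2 * ((n:ℝ)/2) = (n:ℝ) := by
          field_simp
        linarith
      unfold Ffun
      rw [hB]
      ring
    · have hB : Bfun n x y = 0 := by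
        rw [Bfun_eq, hc, hhalf]
        ring
      unfold Ffun
      rw [hB]
      ring
    · have hB : Bfun n x y = -(2*(α:ℝ)) := by
        rw [Bfun_eq, hc, Nat.cast_add, hhalf]
        ring
      unfold Ffun
      rw [hB]
      ring
    · exact absurd hc hdy
  -- linear algebra
  set Wsp : Submodule ℝ ((Fin n → ZMod 2) → ℝ) :=
    Submodule.span ℝ (((AA n).image (mfun n) : Finset _) : Set ((Fin n → ZMod 2) → ℝ))
    with hWsp
  have hFW : ∀ x : Fin n → ZMod 2, Ffun n α x ∈ Wsp := by
    intro x
    rw [Ffun_eq_sum]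
    refine Submodule.sum_mem _ fun S hS => Submodule.smul_mem _ _ (Submodule.subset_span ?_)
    exact Finset.mem_coe.2 (Finset.mem_image_of_mem _ hS)
  have hli : LinearIndependent ℝ (fun x : ↥C' => Ffun n α (x : Fin n → ZMod 2)) := by
    rw [Fintype.linearIndependent_iff]
    intro g hg y
    have hgy := congrFun hg (y : Fin n → ZMod 2)
    rw [Finset.sum_apply] at hgy
    simp only [Pi.smul_apply, smul_eq_mul, Pi.zero_apply] at hgy
    have hsingle : ∑ x : ↥C', g x * Ffun n α (x : Fin n → ZMod 2) (y : Fin n → ZMod 2)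
        = g y * Ffun n α (y : Fin n → ZMod 2) (y : Fin n → ZMod 2) := by
      apply Finset.sum_eq_single_of_mem y (Finset.mem_univ y)
      intro x _ hxy
      have hne : (x : Fin n → ZMod 2) ≠ (y : Fin n → ZMod 2) := fun h => hxy (Subtype.ext h)
      rw [hzero _ x.2 _ y.2 hne, mul_zero]
    rw [hsingle, hself] at hgy
    rcases mul_eq_zero.1 hgy with h | h
    · exact h
    · exact absurd h (by linarith)
  have hliW : LinearIndependent ℝ (fun x : ↥C' => (⟨Ffun n α ↑x, hFW ↑x⟩ : Wsp)) := by
    apply LinearIndependent.of_comp Wsp.subtype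
    exact hli
  have hrank1 : C'.card ≤ Module.finrank ℝ Wsp := by
    simpa [Fintype.card_coe] using hliW.fintype_card_le_finrank
  have hAcard : ((AA n).image (mfun n)).card ≤ n + n.choose 3 := by
    refine le_trans Finset.card_image_le ?_
    unfold AA
    refine le_trans (Finset.card_union_le _ _) ?_
    rw [card_powersetCard, card_powersetCard, card_univ, Fintype.card_fin,
      Nat.choose_one_right]
  have hrank2 : Module.finrank ℝ Wsp ≤ ((AA n).image (mfun n)).card := by
    rw [hWsp]
    simpa [Set.finrank] using finrank_span_finset_le_card ((AA n).image (mfun n))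
  have hkey : C'.card ≤ n + n.choose 3 := le_trans hrank1 (le_trans hrank2 hAcard)
  have hId := six_choose n (by omega)
  have hineq : 3 * (C.card : ℤ) ≤ (n : ℤ) * ((n : ℤ) ^ 2 - 3 * n + 8) := by
    have h1 : 3 * C.card ≤ 6 * (n + n.choose 3) := by omega
    calc 3 * (C.card : ℤ) = ((3 * C.card : ℕ) : ℤ) := by push_cast; ring
      _ ≤ ((6 * (n + n.choose 3) : ℕ) : ℤ) := by exact_mod_cast h1
      _ = (n : ℤ) * ((n : ℤ) ^ 2 - 3 * n + 8) := hId
  refine ⟨hineq, ?_⟩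
  intro heq
  have hCeq : 3 * C.card = 6 * (n + n.choose 3) := by
    have hz : ((3 * C.card : ℕ) : ℤ) = ((6 * (n + n.choose 3) : ℕ) : ℤ) := by
      rw [hId]
      push_cast
      push_cast at heq
      linarith [heq]
    exact_mod_cast hz
  have hC'eq : C'.card = n + n.choose 3 := by omega
  set fam : ↥C' → ((Fin n → ZMod 2) → ℝ) := fun x => Ffun n α ↑x with hfam
  set Vsp : Submodule ℝ ((Fin n → ZMod 2) → ℝ) := Submodule.span ℝ (Set.range fam) with hVsp
  have hVW : Vsp ≤ Wsp := by
    rw [hVsp, Submodule.span_le]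
    rintro _ ⟨x, rfl⟩
    exact hFW ↑x
  have hliV : LinearIndependent ℝ
      (fun x : ↥C' => (⟨fam x, Submodule.subset_span (Set.mem_range_self x)⟩ : Vsp)) := by
    apply LinearIndependent.of_comp Vsp.subtype
    exact hli
  have hrank3 : C'.card ≤ Module.finrank ℝ Vsp := by
    simpa [Fintype.card_coe] using hliV.fintype_card_le_finrank
  have hVeqW : Vsp = Wsp := by
    apply Submodule.eq_of_le_of_finrank_le hVW
    omega
  set T : Finset (Fin n) := {(⟨0, by omega⟩ : Fin n), ⟨1, by omega⟩, ⟨2, by omega⟩} with hT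
  have hTcard : T.card = 3 := by
    rw [hT, Finset.card_insert_of_notMem, Finset.card_insert_of_notMem,
      Finset.card_singleton]
    · simp [Fin.ext_iff]
    · simp [Fin.ext_iff]
  have hTA : T ∈ AA n := by
    unfold AA
    exact Finset.mem_union_right _
      (Finset.mem_powersetCard.2 ⟨fun _ _ => Finset.mem_univ _, hTcard⟩)
  have hmT : mfun n T ∈ Vsp := by
    rw [hVeqW, hWsp]
    exact Submodule.subset_span (Finset.mem_coe.2 (Finset.mem_image_of_mem _ hTA))
  rw [hVsp] at hmT
  obtain ⟨g, hg⟩ := (Submodule.mem_span_range_iff_exists_fun ℝ).1 hmT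
  set K : ℝ := (Fintype.card (Fin n → ZMod 2) : ℝ) with hK
  have hKpos : 0 < K := by
    rw [hK]
    exact_mod_cast Fintype.card_pos
  set L : ℝ := (n:ℝ)^3 - (2*(α:ℝ))^2*(n:ℝ) with hL
  have hLne : L ≠ 0 := ne_of_gt hlampos
  have hmsq : ∀ v : Fin n → ZMod 2, mfun n T v * mfun n T v = 1 := by
    intro v
    unfold mfun
    rw [← Finset.prod_mul_distrib]
    exact Finset.prod_eq_one fun i _ => by rw [← sq, epsR_sq]
  have heval : ∀ y : ↥C', mfun n T (y : Fin n → ZMod 2) = g y * L := by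
    intro y
    have h := congrFun hg (y : Fin n → ZMod 2)
    rw [Finset.sum_apply] at h
    simp only [Pi.smul_apply, smul_eq_mul] at h
    rw [Finset.sum_eq_single_of_mem y (Finset.mem_univ y)] at h
    · have hfy : fam y (y : Fin n → ZMod 2) = L := hself (y : Fin n → ZMod 2)
      rw [hfy] at h
      exact h.symm
    · intro x _ hxy
      have hne : (x : Fin n → ZMod 2) ≠ (y : Fin n → ZMod 2) := fun hh => hxy (Subtype.ext hh)
      have hfz : fam x (y : Fin n → ZMod 2) = 0 := hzero _ x.2 _ y.2 hne
      rw [hfz, mul_zero]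
  have hinner : ∀ x : Fin n → ZMod 2,
      ∑ z : Fin n → ZMod 2, mfun n T z * Ffun n α x z = 6 * mfun n T x * K := by
    intro x
    have hFz : ∀ z, Ffun n α x z = ∑ S ∈ AA n, coefF n α x S * mfun n S z := by
      intro z
      conv_lhs => rw [Ffun_eq_sum n α x]
      rw [Finset.sum_apply]
      simp [smul_eq_mul]
    calc ∑ z : Fin n → ZMod 2, mfun n T z * Ffun n α x z
        = ∑ z : Fin n → ZMod 2, ∑ S ∈ AA n, coefF n α x S * (mfun n T z * mfun n S z) := by
          refine Finset.sum_congr rfl fun z _ => ?_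
          rw [hFz z, Finset.mul_sum]
          exact Finset.sum_congr rfl fun S _ => by ring
      _ = ∑ S ∈ AA n, coefF n α x S * ∑ z : Fin n → ZMod 2, mfun n T z * mfun n S z := by
          rw [Finset.sum_comm]
          exact Finset.sum_congr rfl fun S _ => by rw [Finset.mul_sum]
      _ = coefF n α x T * K := by
          rw [Finset.sum_eq_single_of_mem T hTA]
          · rw [sum_mfun_mul_self, hK]
          · intro S _ hST
            rw [sum_mfun_mul_ne n (fun hh => hST hh.symm), mul_zero]
      _ = 6 * mfun n T x * K := by
          unfold coefF mfun
          rw [if_pos hTcard]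
  have hglobal : K = ∑ x : ↥C', g x * (6 * mfun n T (x : Fin n → ZMod 2) * K) := by
    calc K = ∑ z : Fin n → ZMod 2, mfun n T z * mfun n T z := by
          rw [sum_mfun_mul_self, hK]
      _ = ∑ z : Fin n → ZMod 2, mfun n T z * (∑ x : ↥C', g x • fam x) z := by rw [hg]
      _ = ∑ z : Fin n → ZMod 2, ∑ x : ↥C', g x * (mfun n T z * fam x z) := by
          refine Finset.sum_congr rfl fun z _ => ?_
          rw [Finset.sum_apply, Finset.mul_sum]
          refine Finset.sum_congr rfl fun x _ => ?_
          simp only [Pi.smul_apply, smul_eq_mul]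
          ring
      _ = ∑ x : ↥C', g x * ∑ z : Fin n → ZMod 2, mfun n T z * fam x z := by
          rw [Finset.sum_comm]
          exact Finset.sum_congr rfl fun x _ => by rw [Finset.mul_sum]
      _ = ∑ x : ↥C', g x * (6 * mfun n T (x : Fin n → ZMod 2) * K) := by
          exact Finset.sum_congr rfl fun x _ => by rw [show fam x = Ffun n α ↑x from rfl, hinner]
  have hsum2 : ∑ x : ↥C', g x * (6 * mfun n T (x : Fin n → ZMod 2) * K)
      = (C'.card : ℝ) * (6 * K / L) := by
    have hterm : ∀ x : ↥C', g x * (6 * mfun n T (x : Fin n → ZMod 2) * K) = 6 * K / L := by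
      intro x
      have h := heval x
      have h2 : mfun n T (x : Fin n → ZMod 2) * mfun n T (x : Fin n → ZMod 2)
          = (g x * L) * mfun n T (x : Fin n → ZMod 2) := by rw [← h]
      rw [hmsq (x : Fin n → ZMod 2)] at h2
      have h3 : g x * mfun n T (x : Fin n → ZMod 2) = 1 / L := by
        rw [eq_div_iff hLne]
        linear_combination -h2
      calc g x * (6 * mfun n T (x : Fin n → ZMod 2) * K)
          = 6 * K * (g x * mfun n T (x : Fin n → ZMod 2)) := by ring
        _ = 6 * K * (1 / L) := by rw [h3]
        _ = 6 * K / L := by ring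
    rw [Finset.sum_congr rfl fun x _ => hterm x, Finset.sum_const, Finset.card_univ,
      Fintype.card_coe, nsmul_eq_mul]
  have hLval : L = 6 * (C'.card : ℝ) := by
    rw [hsum2] at hglobal
    have h4 : K * L = K * (6 * (C'.card : ℝ)) := by
      field_simp at hglobal
      rw [hglobal]; ring
    exact mul_left_cancel₀ (ne_of_gt hKpos) h4
  have hIdR : ((6 * (n + n.choose 3) : ℕ) : ℝ) = (n:ℝ) * ((n:ℝ)^2 - 3*(n:ℝ) + 8) := by
    have := congrArg (fun z : ℤ => (z : ℝ)) hId
    push_cast at this ⊢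
    linarith [this]
  have hmain : (n:ℝ)^3 - (2*(α:ℝ))^2*(n:ℝ) = (n:ℝ) * ((n:ℝ)^2 - 3*(n:ℝ) + 8) := by
    rw [← hIdR, ← hL]
    rw [hLval]
    push_cast [hC'eq]
    ring
  have hnR : (n:ℝ) ≠ 0 := by
    have : (0:ℝ) < (n:ℝ) := by exact_mod_cast hn0
    linarith
  have hfinal : 4*(α:ℝ)^2 = 3*(n:ℝ) - 8 := by
    apply mul_left_cancel₀ hnR
    linear_combination -hmain
  exact_mod_cast hfinal
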